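/- Let P be a quaternionic polynomial. Then Z_{P'} ⊆ Kull(Z_{P^s}) holds if and only if for every I ∈ 𝕊², the zeros of P' lying in the slice ℂ(I) are contained in the convex hull of the zeros of P^s lying in ℂ(I). -/

import Mathlib

open Quaternion Polynomial

lemma sq_neg_one {I : ℍ[ℝ]} (h0 : I.re = 0) (h1 : ‖I‖ = 1) : I * I = -1 := by
  have hs : star I = -I := by ext <;> simp [h0]
  have hn : Quaternion.normSq I = 1 := by
    rw [Quaternion.normSq_eq_norm_mul_self, h1]; ring
  have h2 := Quaternion.self_mul_star (a := I)
  rw [hs, hn, mul_neg] at h2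
  have := congrArg Neg.neg h2
  simpa using this

lemma star_coeff_mul (P Pc : Polynomial ℍ[ℝ]) (hPc : ∀ n, Pc.coeff n = star (P.coeff n))
    (n : ℕ) : star ((P * Pc).coeff n) = (P * Pc).coeff n := by
  rw [Polynomial.coeff_mul, star_sum]
  rw [← Finset.Nat.sum_antidiagonal_swap (f := fun x => star (P.coeff x.1 * Pc.coeff x.2))]
  refine Finset.sum_congr rfl fun x _ => ?_
  simp [hPc, star_mul]

/-- Evaluation of a quaternionic polynomial with coefficients written on the right. -/
noncomputable def qeval (P : Polynomial ℍ[ℝ]) (q : ℍ[ℝ]) : ℍ[ℝ] :=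
  P.sum fun n a => q ^ n * a

lemma liftAux_real {J : ℍ[ℝ]} (h : J * J = -1) (r : ℝ) :
    Complex.liftAux J h ((r : ℂ)) = (r : ℍ[ℝ]) := by
  rw [Complex.liftAux_apply]
  simp [Quaternion.algebraMap_def]

lemma qeval_liftAux (R : Polynomial ℍ[ℝ]) (hR : ∀ n, star (R.coeff n) = R.coeff n)
    {J : ℍ[ℝ]} (h : J * J = -1) (z : ℂ) :
    qeval R (Complex.liftAux J h z)
      = Complex.liftAux J h (R.sum fun n a => z ^ n * ((a.re : ℝ) : ℂ)) := by
  unfold qeval Polynomial.sum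
  rw [map_sum]
  refine Finset.sum_congr rfl fun n _ => ?_
  rw [map_mul, map_pow, liftAux_real]
  congr 1
  exact Quaternion.star_eq_self.mp (hR n)

lemma circ (R : Polynomial ℍ[ℝ]) (hR : ∀ n, star (R.coeff n) = R.coeff n)
    {I J : ℍ[ℝ]} (hI0 : I.re = 0) (hI1 : ‖I‖ = 1) (hJ0 : J.re = 0) (hJ1 : ‖J‖ = 1)
    (x y : ℝ) (h : qeval R ((x : ℍ[ℝ]) + y • J) = 0) :
    qeval R ((x : ℍ[ℝ]) + y • I) = 0 := by
  set z : ℂ := ⟨x, y⟩ with hz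
  have key : ∀ K : ℍ[ℝ], (hK : K * K = -1) →
      (x : ℍ[ℝ]) + y • K = Complex.liftAux K hK z := by
    intro K hK
    rw [Complex.liftAux_apply]
    simp [hz, Quaternion.algebraMap_def]
  have hJ2 := sq_neg_one hJ0 hJ1
  have hI2 := sq_neg_one hI0 hI1
  rw [key J hJ2, qeval_liftAux R hR hJ2] at h
  have hinj : Function.Injective (Complex.liftAux J hJ2) :=
    RingHom.injective ((Complex.liftAux J hJ2) : ℂ →+* ℍ[ℝ])
  have hS : (R.sum fun n a => z ^ n * ((a.re : ℝ) : ℂ)) = 0 := by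
    apply hinj; rw [h, map_zero]
  rw [key I hI2, qeval_liftAux R hR hI2, hS, map_zero]

lemma inner_coe (x : ℝ) {I : ℍ[ℝ]} (hI0 : I.re = 0) : (inner ℝ ((x:ℝ):ℍ[ℝ]) I : ℝ) = 0 := by
  rw [Quaternion.inner_def, Quaternion.coe_mul_eq_smul]
  simp [hI0]

lemma inner_self_one {I : ℍ[ℝ]} (hI1 : ‖I‖ = 1) : (inner ℝ I I : ℝ) = 1 := by
  rw [Quaternion.inner_self, Quaternion.normSq_eq_norm_mul_self, hI1, one_mul]

noncomputable def proj (I : ℍ[ℝ]) : ℍ[ℝ] →ₗ[ℝ] ℍ[ℝ] where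
  toFun w := ((w.re : ℝ) : ℍ[ℝ]) + (inner ℝ w I : ℝ) • I
  map_add' a b := by
    simp only [Quaternion.re_add, Quaternion.coe_add, inner_add_left, add_smul]
    abel
  map_smul' r a := by
    ext <;> simp [real_inner_smul_left, mul_add] <;> ring

lemma proj_fix {I : ℍ[ℝ]} (hI0 : I.re = 0) (hI1 : ‖I‖ = 1) (x y : ℝ) :
    proj I ((x : ℍ[ℝ]) + y • I) = (x : ℍ[ℝ]) + y • I := by
  show ((((x:ℍ[ℝ]) + y • I).re : ℝ) : ℍ[ℝ]) + (inner ℝ ((x:ℍ[ℝ]) + y • I) I : ℝ) • I = _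
  rw [inner_add_left, inner_coe x hI0, real_inner_smul_left, inner_self_one hI1]
  simp [hI0]

lemma proj_mem (R : Polynomial ℍ[ℝ]) (hR : ∀ n, star (R.coeff n) = R.coeff n)
    {I : ℍ[ℝ]} (hI0 : I.re = 0) (hI1 : ‖I‖ = 1) (w : ℍ[ℝ]) (hw : qeval R w = 0) :
    proj I w ∈ convexHull ℝ
      {q : ℍ[ℝ] | (∃ x y : ℝ, q = (x : ℍ[ℝ]) + y • I) ∧ qeval R q = 0} := by
  have hproj : proj I w = ((w.re : ℝ) : ℍ[ℝ]) + (inner ℝ w I : ℝ) • I := rfl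
  by_cases him : w.im = 0
  · have hwre : w = ((w.re : ℝ) : ℍ[ℝ]) := by
      conv_lhs => rw [← Quaternion.re_add_im w]
      rw [him, add_zero]
    have hinner : (inner ℝ w I : ℝ) = 0 := by rw [hwre]; exact inner_coe _ hI0
    have hpw : proj I w = w := by rw [hproj, hinner, zero_smul, add_zero, ← hwre]
    apply subset_convexHull
    exact ⟨⟨w.re, 0, by rw [hpw, hwre]; simp⟩, by rw [hpw]; exact hw⟩
  · set y0 := ‖w.im‖ with hy0def
    have hy0 : 0 < y0 := norm_pos_iff.mpr him
    set J := y0⁻¹ • w.im with hJdef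
    have hJ0 : J.re = 0 := by simp [hJdef]
    have hJ1 : ‖J‖ = 1 := by
      rw [hJdef, norm_smul, norm_inv, Real.norm_eq_abs, abs_of_pos hy0, ← hy0def,
        inv_mul_cancel₀ hy0.ne']
    have hwsplit : w = ((w.re : ℝ) : ℍ[ℝ]) + y0 • J := by
      rw [hJdef, smul_smul, mul_inv_cancel₀ hy0.ne', one_smul]
      exact (Quaternion.re_add_im w).symm
    have ha : qeval R ((w.re : ℍ[ℝ]) + y0 • I) = 0 :=
      circ R hR hI0 hI1 hJ0 hJ1 _ _ (hwsplit ▸ hw)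
    have hb : qeval R ((w.re : ℍ[ℝ]) + (-y0) • I) = 0 := by
      have hJ0' : (-J).re = 0 := by simp [hJ0]
      have hJ1' : ‖-J‖ = 1 := by rwa [norm_neg]
      apply circ R hR hI0 hI1 hJ0' hJ1' w.re (-y0)
      rw [neg_smul, smul_neg, neg_neg, ← hwsplit]
      exact hw
    set t : ℝ := inner ℝ w I with htdef
    have htle : |t| ≤ y0 := by
      have h1 : t = inner ℝ w.im I := by
        rw [htdef]
        conv_lhs => rw [← Quaternion.re_add_im w]
        rw [inner_add_left, inner_coe _ hI0, zero_add]
      rw [h1]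
      calc |(inner ℝ w.im I : ℝ)| ≤ ‖w.im‖ * ‖I‖ := abs_real_inner_le_norm _ _
        _ = y0 := by rw [hI1, mul_one, hy0def]
    obtain ⟨htl, htr⟩ := abs_le.mp htle
    set θ := (y0 + t) / (2 * y0) with hθ
    have h1 : 0 ≤ θ := by
      apply div_nonneg <;> linarith
    have h2 : 0 ≤ 1 - θ := by
      rw [hθ]
      rw [sub_nonneg, div_le_one (by linarith)]
      linarith
    have hsc : t = θ * y0 + (1 - θ) * (-y0) := by
      rw [hθ]; field_simp; ring
    have hcombo : proj I w =
        θ • (((w.re : ℝ) : ℍ[ℝ]) + y0 • I) + (1 - θ) • (((w.re : ℝ) : ℍ[ℝ]) + (-y0) • I) := by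
      rw [hproj, hsc]
      module
    have hamem : ((w.re : ℝ) : ℍ[ℝ]) + y0 • I ∈
        {q : ℍ[ℝ] | (∃ x y : ℝ, q = (x : ℍ[ℝ]) + y • I) ∧ qeval R q = 0} :=
      ⟨⟨w.re, y0, rfl⟩, ha⟩
    have hbmem : ((w.re : ℝ) : ℍ[ℝ]) + (-y0) • I ∈
        {q : ℍ[ℝ] | (∃ x y : ℝ, q = (x : ℍ[ℝ]) + y • I) ∧ qeval R q = 0} :=
      ⟨⟨w.re, -y0, rfl⟩, hb⟩
    rw [hcombo]
    exact (convex_convexHull ℝ _)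
      (subset_convexHull ℝ _ hamem)
      (subset_convexHull ℝ _ hbmem) h1 h2 (by ring)

theorem gauss_lucas_stmt14 (P Pc : Polynomial ℍ[ℝ])
    (hPc : ∀ n, Pc.coeff n = star (P.coeff n)) :
    ({q : ℍ[ℝ] | qeval (derivative P) q = 0} ⊆
        convexHull ℝ {q : ℍ[ℝ] | qeval (P * Pc) q = 0}) ↔
    (∀ I : ℍ[ℝ], I.re = 0 → ‖I‖ = 1 →
      {q : ℍ[ℝ] | (∃ x y : ℝ, q = (x : ℍ[ℝ]) + y • I) ∧ qeval (derivative P) q = 0} ⊆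
        convexHull ℝ
          {q : ℍ[ℝ] | (∃ x y : ℝ, q = (x : ℍ[ℝ]) + y • I) ∧ qeval (P * Pc) q = 0}) := by
  have hR : ∀ n, star ((P * Pc).coeff n) = (P * Pc).coeff n := star_coeff_mul P Pc hPc
  constructor
  · intro h I hI0 hI1 q hq
    obtain ⟨⟨x, y, rfl⟩, hq0⟩ := hq
    have hmem : (x : ℍ[ℝ]) + y • I ∈ convexHull ℝ {q : ℍ[ℝ] | qeval (P * Pc) q = 0} :=
      h hq0
    have himg : proj I ((x : ℍ[ℝ]) + y • I) ∈
        (proj I) '' (convexHull ℝ {q : ℍ[ℝ] | qeval (P * Pc) q = 0}) :=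
      Set.mem_image_of_mem _ hmem
    rw [(proj I).image_convexHull, proj_fix hI0 hI1] at himg
    have hsub : (proj I) '' {q : ℍ[ℝ] | qeval (P * Pc) q = 0} ⊆
        convexHull ℝ
          {q : ℍ[ℝ] | (∃ x y : ℝ, q = (x : ℍ[ℝ]) + y • I) ∧ qeval (P * Pc) q = 0} := by
      rintro _ ⟨w, hw, rfl⟩
      exact proj_mem _ hR hI0 hI1 w hw
    exact convexHull_min hsub (convex_convexHull ℝ _) himg
  · intro h q hq
    by_cases him : q.im = 0
    · set I : ℍ[ℝ] := ⟨0, 1, 0, 0⟩ with hI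
      have hI0 : I.re = 0 := rfl
      have hI1 : ‖I‖ = 1 := by
        have h2 : ‖I‖ * ‖I‖ = 1 := by
          rw [← Quaternion.normSq_eq_norm_mul_self]
          simp [Quaternion.normSq_def', hI]
          change Quaternion.normSq I = 1
          rw [Quaternion.normSq_def']
          norm_num [I]
        nlinarith [norm_nonneg I]
      have hqeq : q = ((q.re : ℝ) : ℍ[ℝ]) + (0 : ℝ) • I := by
        rw [zero_smul, add_zero]
        conv_lhs => rw [← Quaternion.re_add_im q]
        rw [him, add_zero]
      have hmem := h I hI0 hI1 ⟨⟨q.re, 0, hqeq⟩, hq⟩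
      exact convexHull_mono (fun r hr => hr.2) hmem
    · set y0 := ‖q.im‖ with hy0def
      have hy0 : 0 < y0 := norm_pos_iff.mpr him
      set I := y0⁻¹ • q.im with hIdef
      have hI0 : I.re = 0 := by simp [hIdef]
      have hI1 : ‖I‖ = 1 := by
        rw [hIdef, norm_smul, norm_inv, Real.norm_eq_abs, abs_of_pos hy0, ← hy0def,
          inv_mul_cancel₀ hy0.ne']
      have hqeq : q = ((q.re : ℝ) : ℍ[ℝ]) + y0 • I := by
        rw [hIdef, smul_smul, mul_inv_cancel₀ hy0.ne', one_smul]
        exact (Quaternion.re_add_im q).symm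
      have hmem := h I hI0 hI1 ⟨⟨q.re, y0, hqeq⟩, hq⟩
      exact convexHull_mono (fun r hr => hr.2) hmem
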